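/- For every n ≥ 1, the map sending a permutation ρ of {1,…,n} to its 321-height vector (h_1,…,h_n) is a bijection from the set of (3,2,1)-avoiding permutations of {1,…,n} onto the set H_n of sequences (h_1,…,h_n) of nonnegative integers with h_n = 0 and h_i ≤ h_{i+1} + 1 for all 1 ≤ i ≤ n−1. -/

import Mathlib

open scoped Classical

/-- An entry `ρ i` is a left-to-right maximum if it is greater than all entries to its left. -/
def IsLRMax {n : ℕ} (ρ : Equiv.Perm (Fin n)) (i : Fin n) : Prop :=
  ∀ j, j < i → ρ j < ρ i

/-- `m` is the last left-to-right maximum of `ρ` strictly before position `i`. -/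
def IsLastLRMaxBefore {n : ℕ} (ρ : Equiv.Perm (Fin n)) (m i : Fin n) : Prop :=
  m < i ∧ IsLRMax ρ m ∧ ∀ p, m < p → p < i → ¬ IsLRMax ρ p

/-- The 321-height of entry `i` of `ρ`:  if `ρ i` is a left-to-right maximum, the number of
entries to the right of `i` that are smaller than `ρ i`; otherwise the number of entries
`ρ k` to the right of `i` with `ρ i < ρ k < ρ m`, where `ρ m` is the last left-to-right
maximum before position `i`. -/
noncomputable def height321 {n : ℕ} (ρ : Equiv.Perm (Fin n)) (i : Fin n) : ℕ :=
  if IsLRMax ρ i then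
    (Finset.univ.filter (fun k => i < k ∧ ρ k < ρ i)).card
  else
    (Finset.univ.filter (fun k => i < k ∧ ρ i < ρ k ∧
      ∃ m, IsLastLRMaxBefore ρ m i ∧ ρ k < ρ m)).card


section Helpers

variable {n : ℕ}

/-- counting helper: membership in a down-closed subset of `Fin m` is determined by card -/
lemma mem_downClosed_iff_lt_card {m : ℕ} (D : Finset (Fin m))
    (hD : ∀ j k : Fin m, j ≤ k → k ∈ D → j ∈ D) (j : Fin m) :
    j ∈ D ↔ (j : ℕ) < D.card := by
  constructor
  · intro hj
    have hsub : Finset.Iic j ⊆ D := fun k hk => hD k j (Finset.mem_Iic.mp hk) hj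
    have := Finset.card_le_card hsub
    rw [Fin.card_Iic] at this; omega
  · intro hj
    by_contra hjD
    have hsub : D ⊆ Finset.Iio j := by
      intro k hk
      rw [Finset.mem_Iio]
      by_contra hk'
      exact hjD (hD j k (le_of_not_gt hk') hk)
    have := Finset.card_le_card hsub
    rw [Fin.card_Iio] at this; omega

lemma orderEmbOfFin_lt_iff (s : Finset (Fin n)) (j : Fin s.card) (x : Fin n) :
    s.orderEmbOfFin rfl j < x ↔ (j : ℕ) < (s.filter (· < x)).card := by
  set e := s.orderEmbOfFin rfl with he
  set D : Finset (Fin s.card) := Finset.univ.filter (fun j => e j < x) with hDdef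
  have hDcard : D.card = (s.filter (· < x)).card := by
    apply Finset.card_bij (fun j _ => e j)
    · intro a ha
      rw [Finset.mem_filter]
      exact ⟨Finset.orderEmbOfFin_mem s rfl a, (Finset.mem_filter.mp ha).2⟩
    · intro a _ b _ hab
      exact e.injective hab
    · intro b hb
      rw [Finset.mem_filter] at hb
      have : b ∈ Set.range e := by
        rw [he, Finset.range_orderEmbOfFin]; exact hb.1
      obtain ⟨a, ha⟩ := this
      exact ⟨a, by simp [hDdef, ha, hb.2], ha⟩
  have hdc : ∀ j k : Fin s.card, j ≤ k → k ∈ D → j ∈ D := by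
    intro j k hjk hk
    rw [hDdef, Finset.mem_filter] at hk ⊢
    exact ⟨Finset.mem_univ _, lt_of_le_of_lt (e.monotone hjk) hk.2⟩
  rw [← hDcard, ← mem_downClosed_iff_lt_card D hdc j, hDdef, Finset.mem_filter]
  simp

lemma card_filter_lt_orderEmbOfFin (s : Finset (Fin n)) (j : Fin s.card) :
    (s.filter (· < s.orderEmbOfFin rfl j)).card = (j : ℕ) := by
  have h1 := orderEmbOfFin_lt_iff s j (s.orderEmbOfFin rfl j)
  simp only [lt_self_iff_false, false_iff, not_lt] at h1
  refine le_antisymm h1 ?_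
  have := Finset.card_le_card_of_injOn (fun k : Fin s.card => s.orderEmbOfFin rfl k)
    (s := Finset.Iio j)
    (t := s.filter (· < s.orderEmbOfFin rfl j))
    (fun a ha => by
      rw [Finset.mem_coe, Finset.mem_filter]
      exact ⟨Finset.orderEmbOfFin_mem s rfl a,
        (s.orderEmbOfFin rfl).strictMono (Finset.mem_Iio.mp ha)⟩)
    (fun a _ b _ hab => (s.orderEmbOfFin rfl).injective hab)
  rwa [Fin.card_Iio] at this

lemma card_filter_lt_perm (ρ : Equiv.Perm (Fin n)) (x : Fin n) :
    (Finset.univ.filter (fun k => ρ k < x)).card = (x : ℕ) := by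
  rw [← Fin.card_Iio x]
  apply Finset.card_bij (fun k _ => ρ k)
  · intro a ha
    rw [Finset.mem_Iio]
    exact (Finset.mem_filter.mp ha).2
  · intro a _ b _ hab
    exact ρ.injective hab
  · intro b hb
    exact ⟨ρ.symm b, by simp [Finset.mem_Iio.mp hb], by simp⟩

lemma card_split_at (i : Fin n) (p : Fin n → Prop) [DecidablePred p]
    [DecidablePred (fun k => i < k ∧ p k)] (hp : ∀ k, k < i → p k) (hpi : ¬ p i) :
    (Finset.univ.filter p).card = (i : ℕ) + (Finset.univ.filter (fun k => i < k ∧ p k)).card := by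
  have hunion : Finset.univ.filter p
      = (Finset.Iio i) ∪ Finset.univ.filter (fun k => i < k ∧ p k) := by
    ext k
    simp only [Finset.mem_filter, Finset.mem_union, Finset.mem_Iio, Finset.mem_univ, true_and]
    constructor
    · intro hk
      rcases lt_trichotomy k i with h | h | h
      · exact Or.inl h
      · exact absurd (h ▸ hk) hpi
      · exact Or.inr ⟨h, hk⟩
    · rintro (h | ⟨h1, h2⟩)
      · exact hp _ h
      · exact h2
  rw [hunion, Finset.card_union_of_disjoint, Fin.card_Iio]
  rw [Finset.disjoint_left]
  intro k hk hk'
  rw [Finset.mem_Iio] at hk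
  exact absurd ((Finset.mem_filter.mp hk').2.1.trans hk) (lt_irrefl i)

end Helpers

section Forward

variable {n : ℕ} (ρ : Equiv.Perm (Fin n))

lemma exists_isLastLRMaxBefore {i : Fin n} (hi : (0 : ℕ) < (i : ℕ)) :
    ∃ m, IsLastLRMaxBefore ρ m i ∧ ∀ j, j < i → ρ j ≤ ρ m := by
  have hne : (Finset.Iio i).Nonempty := ⟨⟨0, lt_of_le_of_lt (Nat.zero_le _) i.isLt⟩,
    Finset.mem_Iio.mpr (by rwa [Fin.lt_def])⟩
  obtain ⟨m, hm, hmax⟩ := Finset.exists_max_image (Finset.Iio i) (fun j => ρ j) hne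
  rw [Finset.mem_Iio] at hm
  have hstrong : ∀ j, j < i → ρ j ≤ ρ m := fun j hj => hmax j (Finset.mem_Iio.mpr hj)
  refine ⟨m, ⟨hm, ?_, ?_⟩, hstrong⟩
  · intro j hj
    exact lt_of_le_of_ne (hstrong j (hj.trans hm)) (fun h => absurd (ρ.injective h) (ne_of_lt hj))
  · intro p hp1 hp2 hLR
    have h1 : ρ m < ρ p := hLR m hp1
    exact absurd (hstrong p hp2) (not_le.mpr h1)

lemma isLastLRMaxBefore_unique {m m' i : Fin n} (h : IsLastLRMaxBefore ρ m i)
    (h' : IsLastLRMaxBefore ρ m' i) : m = m' := by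
  rcases lt_trichotomy m m' with hlt | heq | hlt
  · exact absurd h'.2.1 (h.2.2 m' hlt h'.1)
  · exact heq
  · exact absurd h.2.1 (h'.2.2 m hlt h.1)

lemma isLastLRMaxBefore_strong {m i : Fin n} (h : IsLastLRMaxBefore ρ m i) :
    ∀ j, j < i → ρ j ≤ ρ m := by
  have h0 : (0 : ℕ) < (i : ℕ) := lt_of_le_of_lt (Nat.zero_le _) (Fin.lt_def.mp h.1)
  obtain ⟨m', hm', hstrong⟩ := exists_isLastLRMaxBefore ρ h0
  rwa [isLastLRMaxBefore_unique ρ h hm']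

lemma lt_lastLRMax {m i : Fin n} (h : IsLastLRMaxBefore ρ m i) (hni : ¬ IsLRMax ρ i) :
    ρ i < ρ m := by
  rw [IsLRMax] at hni
  push_neg at hni
  obtain ⟨j, hj, hle⟩ := hni
  have h1 : ρ i ≤ ρ j := hle
  have h2 : ρ j ≤ ρ m := isLastLRMaxBefore_strong ρ h j hj
  refine lt_of_le_of_ne (h1.trans h2) (fun he => ?_)
  exact absurd (ρ.injective he).symm (ne_of_lt h.1)

lemma height321_nonmax {i m : Fin n} (hni : ¬ IsLRMax ρ i) (hm : IsLastLRMaxBefore ρ m i) :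
    height321 ρ i = (Finset.univ.filter (fun k => i < k ∧ ρ i < ρ k ∧ ρ k < ρ m)).card := by
  rw [height321, if_neg hni]
  congr 1
  apply Finset.filter_congr
  intro k _
  constructor
  · rintro ⟨h1, h2, m', hm', h3⟩
    exact ⟨h1, h2, (isLastLRMaxBefore_unique ρ hm' hm) ▸ h3⟩
  · rintro ⟨h1, h2, h3⟩
    exact ⟨h1, h2, m, hm, h3⟩

lemma val_eq_of_isLRMax {i : Fin n} (hLR : IsLRMax ρ i) :
    (ρ i : ℕ) = (i : ℕ) + height321 ρ i := by
  rw [height321, if_pos hLR, ← card_filter_lt_perm ρ (ρ i)]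
  exact card_split_at i (fun k => ρ k < ρ i) hLR (lt_irrefl _)

lemma height321_last {i : Fin n} (hi : (i : ℕ) = n - 1) : height321 ρ i = 0 := by
  have hnone : ∀ k : Fin n, ¬ i < k := by
    intro k hk
    rw [Fin.lt_def] at hk
    have := k.isLt
    omega
  rw [height321]
  split <;>
  · rw [Finset.card_eq_zero, Finset.filter_eq_empty_iff]
    intro k _ hk
    exact hnone k hk.1

end Forward

section Step

variable {n : ℕ} (ρ : Equiv.Perm (Fin n))

def Avoids321 {n : ℕ} (ρ : Equiv.Perm (Fin n)) : Prop :=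
  ∀ a b c : Fin n, a < b → b < c → ¬(ρ c < ρ b ∧ ρ b < ρ a)

lemma isLRMax_of_val_zero {i : Fin n} (hi : (i : ℕ) = 0) : IsLRMax ρ i :=
  fun j hj => by exfalso; rw [Fin.lt_def] at hj; omega

lemma pos_of_not_isLRMax {i : Fin n} (hi : ¬ IsLRMax ρ i) : (0 : ℕ) < (i : ℕ) := by
  by_contra h0
  exact hi (isLRMax_of_val_zero ρ (by omega))

lemma step_nonmax (hA : Avoids321 ρ) {i i' : Fin n} (hii' : (i' : ℕ) = (i : ℕ) + 1)
    (h' : ¬ IsLRMax ρ i') : height321 ρ i = height321 ρ i' + 1 := by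
  have hlt : i < i' := by rw [Fin.lt_def]; omega
  by_cases hLR : IsLRMax ρ i
  · have hlast : IsLastLRMaxBefore ρ i i' := by
      refine ⟨hlt, hLR, fun p hp1 hp2 => ?_⟩
      exfalso; rw [Fin.lt_def] at hp1 hp2; omega
    have hρ : ρ i' < ρ i := lt_lastLRMax ρ hlast h'
    rw [height321_nonmax ρ h' hlast, height321, if_pos hLR]
    have hins : Finset.univ.filter (fun k => i < k ∧ ρ k < ρ i)
        = insert i' (Finset.univ.filter (fun k => i' < k ∧ ρ i' < ρ k ∧ ρ k < ρ i)) := by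
      ext k
      simp only [Finset.mem_filter, Finset.mem_univ, true_and, Finset.mem_insert]
      constructor
      · rintro ⟨h1, h2⟩
        by_cases hk : k = i'
        · exact Or.inl hk
        · have hne : (k : ℕ) ≠ (i' : ℕ) := fun h => hk (Fin.ext h)
          have hik' : i' < k := by rw [Fin.lt_def] at h1 ⊢; omega
          refine Or.inr ⟨hik', ?_, h2⟩
          by_contra hle
          have hne2 : ρ k ≠ ρ i' := fun h => hk (ρ.injective h)
          exact hA i i' k hlt hik' ⟨lt_of_le_of_ne (not_lt.mp hle) hne2, hρ⟩
      · rintro (rfl | ⟨h1, h2, h3⟩)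
        · exact ⟨hlt, hρ⟩
        · exact ⟨hlt.trans h1, h3⟩
    rw [hins, Finset.card_insert_of_notMem (by simp)]
  · have hipos := pos_of_not_isLRMax ρ hLR
    obtain ⟨m, hm, _⟩ := exists_isLastLRMaxBefore ρ hipos
    have hm' : IsLastLRMaxBefore ρ m i' := by
      refine ⟨hm.1.trans hlt, hm.2.1, fun p hp1 hp2 => ?_⟩
      by_cases hpi : p = i
      · rw [hpi]; exact hLR
      · apply hm.2.2 p hp1
        have : (p : ℕ) ≠ (i : ℕ) := fun h => hpi (Fin.ext h)
        rw [Fin.lt_def] at hp2 ⊢; omega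
    have hρi : ρ i < ρ m := lt_lastLRMax ρ hm hLR
    have hρi' : ρ i' < ρ m := lt_lastLRMax ρ hm' h'
    have hii : ρ i < ρ i' := by
      by_contra hle
      have hne : ρ i' ≠ ρ i := fun h => (ne_of_lt hlt) (ρ.injective h).symm
      exact hA m i i' hm.1 hlt ⟨lt_of_le_of_ne (not_lt.mp hle) hne, hρi⟩
    rw [height321_nonmax ρ hLR hm, height321_nonmax ρ h' hm']
    have hins : Finset.univ.filter (fun k => i < k ∧ ρ i < ρ k ∧ ρ k < ρ m)
        = insert i' (Finset.univ.filter (fun k => i' < k ∧ ρ i' < ρ k ∧ ρ k < ρ m)) := by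
      ext k
      simp only [Finset.mem_filter, Finset.mem_univ, true_and, Finset.mem_insert]
      constructor
      · rintro ⟨h1, h2, h3⟩
        by_cases hk : k = i'
        · exact Or.inl hk
        · have hne : (k : ℕ) ≠ (i' : ℕ) := fun h => hk (Fin.ext h)
          have hik' : i' < k := by rw [Fin.lt_def] at h1 ⊢; omega
          refine Or.inr ⟨hik', ?_, h3⟩
          by_contra hle
          have hne2 : ρ k ≠ ρ i' := fun h => hk (ρ.injective h)
          exact hA m i' k (hm.1.trans hlt) hik' ⟨lt_of_le_of_ne (not_lt.mp hle) hne2, hρi'⟩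
      · rintro (rfl | ⟨h1, h2, h3⟩)
        · exact ⟨hlt, hii, hρi'⟩
        · exact ⟨hlt.trans h1, hii.trans h2, h3⟩
    rw [hins, Finset.card_insert_of_notMem (by simp)]

lemma step_max (hA : Avoids321 ρ) {i i' : Fin n} (hii' : (i' : ℕ) = (i : ℕ) + 1)
    (h' : IsLRMax ρ i') : height321 ρ i ≤ height321 ρ i' := by
  have hlt : i < i' := by rw [Fin.lt_def]; omega
  by_cases hLR : IsLRMax ρ i
  · rw [height321, if_pos hLR, height321, if_pos h']
    apply Finset.card_le_card
    intro k hk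
    rw [Finset.mem_filter] at hk ⊢
    obtain ⟨_, h1, h2⟩ := hk
    have hii : ρ i < ρ i' := h' i hlt
    have hkne : k ≠ i' := fun h => absurd (h ▸ h2) (lt_asymm hii)
    have hne : (k : ℕ) ≠ (i' : ℕ) := fun h => hkne (Fin.ext h)
    refine ⟨Finset.mem_univ _, ?_, h2.trans hii⟩
    rw [Fin.lt_def] at h1 ⊢; omega
  · have hipos := pos_of_not_isLRMax ρ hLR
    obtain ⟨m, hm, _⟩ := exists_isLastLRMaxBefore ρ hipos
    have hmi' : ρ m < ρ i' := h' m (hm.1.trans hlt)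
    rw [height321_nonmax ρ hLR hm, height321, if_pos h']
    apply Finset.card_le_card
    intro k hk
    rw [Finset.mem_filter] at hk ⊢
    obtain ⟨_, h1, h2, h3⟩ := hk
    have hkρ : ρ k < ρ i' := h3.trans hmi'
    have hkne : k ≠ i' := fun h => absurd (h ▸ hkρ) (lt_irrefl _)
    have hne : (k : ℕ) ≠ (i' : ℕ) := fun h => hkne (Fin.ext h)
    refine ⟨Finset.mem_univ _, ?_, hkρ⟩
    rw [Fin.lt_def] at h1 ⊢; omega

lemma nonmax_mono (hA : Avoids321 ρ) {i j : Fin n} (hi : ¬ IsLRMax ρ i)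
    (hj : ¬ IsLRMax ρ j) (hij : i < j) : ρ i < ρ j := by
  by_contra hle
  have hne : ρ j ≠ ρ i := fun h => (ne_of_lt hij) (ρ.injective h).symm
  have h1 : ρ j < ρ i := lt_of_le_of_ne (not_lt.mp hle) hne
  obtain ⟨m, hm, _⟩ := exists_isLastLRMaxBefore ρ (pos_of_not_isLRMax ρ hi)
  exact hA m i j hm.1 hij ⟨h1, lt_lastLRMax ρ hm hi⟩

end Step

section Inj

variable {n : ℕ}

lemma heights_injective (ρ σ : Equiv.Perm (Fin n)) (hAρ : Avoids321 ρ) (hAσ : Avoids321 σ)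
    (hh : ∀ i, height321 ρ i = height321 σ i) : ρ = σ := by
  -- the LR-max sets coincide
  have hIff : ∀ i, IsLRMax ρ i ↔ IsLRMax σ i := by
    intro i
    rcases Nat.eq_zero_or_pos (i : ℕ) with h0 | hpos
    · exact iff_of_true (isLRMax_of_val_zero ρ h0) (isLRMax_of_val_zero σ h0)
    · set i₀ : Fin n := ⟨(i : ℕ) - 1, by omega⟩ with hi₀
      have hval : (i : ℕ) = (i₀ : ℕ) + 1 := by simp [hi₀]; omega
      have cρ : IsLRMax ρ i ↔ height321 ρ i₀ ≤ height321 ρ i := by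
        constructor
        · exact step_max ρ hAρ hval
        · intro hle
          by_contra hn
          have := step_nonmax ρ hAρ hval hn
          omega
      have cσ : IsLRMax σ i ↔ height321 σ i₀ ≤ height321 σ i := by
        constructor
        · exact step_max σ hAσ hval
        · intro hle
          by_contra hn
          have := step_nonmax σ hAσ hval hn
          omega
      rw [cρ, cσ, hh, hh]
  -- values agree on maxima
  have hvals : ∀ i, IsLRMax ρ i → ρ i = σ i := by
    intro i hi
    have h1 := val_eq_of_isLRMax ρ hi
    have h2 := val_eq_of_isLRMax σ ((hIff i).mp hi)
    exact Fin.ext (by rw [h1, h2, hh])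
  set S : Finset (Fin n) := Finset.univ.filter (fun i => IsLRMax ρ i) with hS
  set T : Finset (Fin n) := Finset.univ.filter (fun i => ¬ IsLRMax ρ i) with hT
  have hmemT : ∀ i, i ∈ T ↔ ¬ IsLRMax ρ i := by intro i; simp [hT]
  have hmemS : ∀ i, i ∈ S ↔ IsLRMax ρ i := by intro i; simp [hS]
  -- images of T coincide
  have himg : ∀ τ : Equiv.Perm (Fin n), (∀ i, IsLRMax τ i ↔ IsLRMax ρ i) →
      T.image τ = (S.image τ)ᶜ := by
    intro τ hτ
    ext x
    have e1 : x ∈ T.image τ ↔ ¬ IsLRMax ρ (τ.symm x) := by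
      rw [Finset.mem_image]
      constructor
      · rintro ⟨a, ha, rfl⟩
        rw [Equiv.symm_apply_apply]
        exact (hmemT a).mp ha
      · intro hx
        exact ⟨τ.symm x, (hmemT _).mpr hx, τ.apply_symm_apply x⟩
    have e2 : x ∈ S.image τ ↔ IsLRMax ρ (τ.symm x) := by
      rw [Finset.mem_image]
      constructor
      · rintro ⟨a, ha, rfl⟩
        rw [Equiv.symm_apply_apply]
        exact (hmemS a).mp ha
      · intro hx
        exact ⟨τ.symm x, (hmemS _).mpr hx, τ.apply_symm_apply x⟩
    rw [Finset.mem_compl, e1, e2]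
  have hSimg : S.image ρ = S.image σ :=
    Finset.image_congr (fun x hx => hvals x ((hmemS x).mp hx))
  have hUU : T.image ρ = T.image σ := by
    rw [himg ρ (fun i => Iff.rfl), himg σ (fun i => (hIff i).symm), hSimg]
  -- strictly monotone enumerations coincide
  have hcardρ : (T.image ρ).card = T.card := Finset.card_image_of_injective T ρ.injective
  have hf1 : (fun j : Fin T.card => ρ (T.orderEmbOfFin rfl j)) = (T.image ρ).orderEmbOfFin hcardρ := by
    apply Finset.orderEmbOfFin_unique
    · intro x
      exact Finset.mem_image_of_mem ρ (Finset.orderEmbOfFin_mem T rfl x)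
    · intro j k hjk
      exact nonmax_mono ρ hAρ
        ((hmemT _).mp (Finset.orderEmbOfFin_mem T rfl j))
        ((hmemT _).mp (Finset.orderEmbOfFin_mem T rfl k))
        ((T.orderEmbOfFin rfl).strictMono hjk)
  have hf2 : (fun j : Fin T.card => σ (T.orderEmbOfFin rfl j)) = (T.image ρ).orderEmbOfFin hcardρ := by
    apply Finset.orderEmbOfFin_unique
    · intro x
      rw [hUU]
      exact Finset.mem_image_of_mem σ (Finset.orderEmbOfFin_mem T rfl x)
    · intro j k hjk
      exact nonmax_mono σ hAσ
        ((hIff _).not.mp ((hmemT _).mp (Finset.orderEmbOfFin_mem T rfl j)))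
        ((hIff _).not.mp ((hmemT _).mp (Finset.orderEmbOfFin_mem T rfl k)))
        ((T.orderEmbOfFin rfl).strictMono hjk)
  have hf12 : ∀ j : Fin T.card, ρ (T.orderEmbOfFin rfl j) = σ (T.orderEmbOfFin rfl j) := by
    intro j
    have := congrFun hf1 j
    rw [this, congrFun hf2 j]
  apply Equiv.ext
  intro i
  by_cases hi : IsLRMax ρ i
  · exact hvals i hi
  · have hiT : i ∈ T := (hmemT i).mpr hi
    have : i ∈ Set.range (T.orderEmbOfFin rfl) := by
      rw [Finset.range_orderEmbOfFin]
      exact hiT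
    obtain ⟨j, hj⟩ := this
    rw [← hj]
    exact hf12 j

end Inj

section Surj

variable {n : ℕ}

lemma compl_filter_lt_card (A : Finset (Fin n)) (x : Fin n) :
    ((Aᶜ).filter (· < x)).card + (A.filter (· < x)).card = (x : ℕ) := by
  rw [← Fin.card_Iio x, ← Finset.card_union_of_disjoint]
  · congr 1
    ext k
    simp only [Finset.mem_union, Finset.mem_filter, Finset.mem_compl, Finset.mem_Iio]
    tauto
  · rw [Finset.disjoint_left]
    intro k hk hk'
    exact (Finset.mem_compl.mp (Finset.mem_filter.mp hk).1) (Finset.mem_filter.mp hk').1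

lemma heights_surjective (hn : 1 ≤ n) (h : Fin n → ℕ)
    (h0 : h ⟨n - 1, Nat.sub_lt hn Nat.one_pos⟩ = 0)
    (hstep : ∀ i : ℕ, ∀ hi : i + 1 < n, h ⟨i, Nat.lt_of_succ_lt hi⟩ ≤ h ⟨i + 1, hi⟩ + 1) :
    ∃ ρ : Equiv.Perm (Fin n), Avoids321 ρ ∧ ∀ i, height321 ρ i = h i := by
  -- chain inequality
  have hchain : ∀ (k : ℕ) (hk : k < n) (j : ℕ) (hj : j ≤ k),
      h ⟨j, by omega⟩ ≤ h ⟨k, hk⟩ + (k - j) := by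
    intro k
    induction k with
    | zero =>
      intro hk j hj
      have : j = 0 := by omega
      subst this; simp
    | succ k ih =>
      intro hk j hj
      by_cases hj' : j = k + 1
      · subst hj'; simp
      · have h1 := ih (by omega) j (by omega)
        have h2 := hstep k hk
        omega
  have hbound : ∀ i : Fin n, (i : ℕ) + h i ≤ n - 1 := by
    intro i
    have h1 := hchain (n - 1) (by omega) (i : ℕ) (by have := i.isLt; omega)
    have h2 : (⟨(i : ℕ), by omega⟩ : Fin n) = i := Fin.ext rfl
    rw [h2, h0] at h1
    have := i.isLt
    omega
  set S : Finset (Fin n) :=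
    Finset.univ.filter (fun i : Fin n => ∀ j : Fin n, (j : ℕ) + 1 = (i : ℕ) → h j ≤ h i) with hSdef
  set T : Finset (Fin n) := Sᶜ with hTdef
  have hmemT : ∀ i : Fin n, i ∈ T ↔ i ∉ S := fun i => Finset.mem_compl
  have hmemS : ∀ i : Fin n, i ∈ S ↔ ∀ j : Fin n, (j : ℕ) + 1 = (i : ℕ) → h j ≤ h i := by
    intro i; rw [hSdef]; simp
  have hS0 : (⟨0, by omega⟩ : Fin n) ∈ S := by
    rw [hmemS]; intro j hj; exfalso
    have hj' : (j : ℕ) + 1 = 0 := hj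
    omega
  have hTpos : ∀ i ∈ T, 0 < (i : ℕ) := by
    intro i hi
    by_contra h0'
    have : i = ⟨0, by omega⟩ := Fin.ext (show (i : ℕ) = 0 by omega)
    exact (hmemT i).mp hi (this ▸ hS0)
  have hTpred : ∀ i ∈ T, ∀ (hpf : (i : ℕ) - 1 < n), h ⟨(i : ℕ) - 1, hpf⟩ = h i + 1 := by
    intro i hi hpf
    have hpos := hTpos i hi
    have hni := (hmemT i).mp hi
    rw [hmemS] at hni
    push_neg at hni
    obtain ⟨j, hj1, hj2⟩ := hni
    have hj1' : (j : ℕ) + 1 = (i : ℕ) := hj1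
    have hj : j = ⟨(i : ℕ) - 1, hpf⟩ := Fin.ext (show (j : ℕ) = (i : ℕ) - 1 by omega)
    subst hj
    have := hstep ((i : ℕ) - 1) (by have := i.isLt; omega)
    have he : (⟨(i : ℕ) - 1 + 1, by have := i.isLt; omega⟩ : Fin n) = i :=
      Fin.ext (show (i : ℕ) - 1 + 1 = (i : ℕ) by omega)
    rw [he] at this
    omega
  -- gap lemma
  have hgap : ∀ (d : ℕ) (m i : Fin n), (i : ℕ) = (m : ℕ) + d →
      (∀ p : Fin n, m < p → p ≤ i → p ∈ T) → h m = h i + d := by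
    intro d
    induction d with
    | zero =>
      intro m i hdi _
      have : i = m := Fin.ext (by omega)
      subst this; simp
    | succ d ih =>
      intro m i hdi hcond
      have hiT : i ∈ T := hcond i (by rw [Fin.lt_def]; omega) le_rfl
      have hpred := hTpred i hiT (by have := i.isLt; omega)
      set i₁ : Fin n := ⟨(m : ℕ) + d, by have := i.isLt; omega⟩ with hi₁
      have he : (⟨(i : ℕ) - 1, by have := i.isLt; omega⟩ : Fin n) = i₁ :=
        Fin.ext (show (i : ℕ) - 1 = (m : ℕ) + d by omega)
      rw [he] at hpred
      have h1 := ih m i₁ (show ((i₁ : Fin n) : ℕ) = (m : ℕ) + d from rfl)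
        (fun p hp1 hp2 => hcond p hp1 (le_trans hp2 (show i₁ ≤ i from Fin.le_def.mpr (by
          show (m : ℕ) + d ≤ (i : ℕ); omega))))
      omega
  -- the value map on S
  set v : Fin n → Fin n := fun i => ⟨(i : ℕ) + h i, lt_of_le_of_lt (hbound i) (by omega)⟩ with hvdef
  have hvval : ∀ i : Fin n, (v i : ℕ) = (i : ℕ) + h i := fun i => rfl
  have hvmono : ∀ i ∈ S, ∀ j : Fin n, j < i → (j : ℕ) + h j < (i : ℕ) + h i := by
    intro i hi j hj
    have hipos : 0 < (i : ℕ) := lt_of_le_of_lt (Nat.zero_le _) (Fin.lt_def.mp hj)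
    set i₁ : Fin n := ⟨(i : ℕ) - 1, by omega⟩ with hi₁
    have hpred : h i₁ ≤ h i := (hmemS i).mp hi i₁ (show (i : ℕ) - 1 + 1 = (i : ℕ) by omega)
    have hch := hchain ((i : ℕ) - 1) (by have := i.isLt; omega) (j : ℕ) (by have := Fin.lt_def.mp hj; omega)
    have hch' : h j ≤ h i₁ + ((i : ℕ) - 1 - (j : ℕ)) := hch
    have := Fin.lt_def.mp hj
    clear hch
    omega
  -- counting functions
  set a : Fin n → ℕ := fun i => (S.filter (· < i)).card with hadef
  set r : Fin n → ℕ := fun i => (T.filter (· < i)).card with hrdef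
  have hsplit : ∀ i : Fin n, r i + a i = (i : ℕ) := fun i => compl_filter_lt_card S i
  have hrlt : ∀ i ∈ T, r i < T.card := by
    intro i hi
    apply Finset.card_lt_card
    rw [Finset.ssubset_iff_of_subset (Finset.filter_subset _ _)]
    exact ⟨i, hi, by simp⟩
  -- image and complement
  have hvinj : Set.InjOn v S := by
    intro x hx y hy hxy
    rcases lt_trichotomy x y with hlt | heq | hlt
    · have := hvmono y (by simpa using hy) x hlt
      exact absurd (congrArg Fin.val hxy) (by rw [hvval, hvval]; omega)
    · exact heq
    · have := hvmono x (by simpa using hx) y hlt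
      exact absurd (congrArg Fin.val hxy) (by rw [hvval, hvval]; omega)
  set W : Finset (Fin n) := (S.image v)ᶜ with hWdef
  have hWcard : W.card = T.card := by
    rw [hWdef, hTdef, Finset.card_compl, Finset.card_compl, Finset.card_image_of_injOn hvinj]
  set w : Fin W.card ↪o Fin n := W.orderEmbOfFin rfl with hwdef
  have hrltW : ∀ i, i ∈ T → r i < W.card := by
    intro i hi; rw [hWcard]; exact hrlt i hi
  -- the function
  set g0 : Fin n → Fin n := fun i =>
    if hi : i ∈ T then w ⟨r i, hrltW i hi⟩ else v i with hg0def
  have hg0T : ∀ i (hi : i ∈ T), g0 i = w ⟨r i, hrltW i hi⟩ := by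
    intro i hi; rw [hg0def]; simp only [dif_pos hi]
  have hg0S : ∀ i, i ∉ T → g0 i = v i := by
    intro i hi; rw [hg0def]; simp only [dif_neg hi]
  have hg0W : ∀ i (hi : i ∈ T), g0 i ∈ W := by
    intro i hi; rw [hg0T i hi]; exact Finset.orderEmbOfFin_mem W rfl _
  have hg0nW : ∀ i, i ∉ T → g0 i ∉ W := by
    intro i hi
    rw [hg0S i hi, hWdef, Finset.mem_compl, not_not]
    have hiS : i ∈ S := by
      by_contra hS
      exact hi ((hmemT i).mpr hS)
    exact Finset.mem_image_of_mem v hiS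
  -- monotonicity on T
  have hrmono : ∀ x y, x ∈ T → y ∈ T → x < y → r x < r y := by
    intro x y hx hy hxy
    apply Finset.card_lt_card
    rw [Finset.ssubset_iff_of_subset]
    · exact ⟨x, Finset.mem_filter.mpr ⟨hx, hxy⟩, by simp⟩
    · intro k hk
      rw [Finset.mem_filter] at hk ⊢
      exact ⟨hk.1, lt_trans hk.2 hxy⟩
  have hTmono : ∀ x y, x ∈ T → y ∈ T → x < y → g0 x < g0 y := by
    intro x y hx hy hxy
    rw [hg0T x hx, hg0T y hy]
    exact w.strictMono (by rw [Fin.mk_lt_mk]; exact hrmono x y hx hy hxy)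
  -- counting: values of image v below v i
  have hCV : ∀ i ∈ S, ((S.image v).filter (· < v i)).card = a i := by
    intro i hi
    have himg : (S.image v).filter (· < v i) = (S.filter (· < i)).image v := by
      ext x
      simp only [Finset.mem_filter, Finset.mem_image]
      constructor
      · rintro ⟨⟨k, hk, rfl⟩, hlt⟩
        refine ⟨k, ⟨hk, ?_⟩, rfl⟩
        rcases lt_trichotomy k i with hki | hki | hki
        · exact hki
        · subst hki; exact absurd hlt (lt_irrefl _)
        · exfalso
          have := hvmono k hk i hki
          have := Fin.lt_def.mp hlt
          rw [hvval, hvval] at this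
          omega
      · rintro ⟨k, ⟨hk, hki⟩, rfl⟩
        refine ⟨⟨k, hk, rfl⟩, ?_⟩
        rw [Fin.lt_def, hvval, hvval]
        exact hvmono i (by simpa [hSdef] using hi) k hki
    rw [himg, Finset.card_image_of_injOn (hvinj.mono (by intro x hx; exact (Finset.mem_filter.mp hx).1))]
  have hCW : ∀ x : Fin n, (W.filter (· < x)).card + ((S.image v).filter (· < x)).card = (x : ℕ) :=
    fun x => compl_filter_lt_card (S.image v) x
  have hacount : ∀ (j i : Fin n), j ∈ T → j < i → a i ≤ a j + ((i : ℕ) - (j : ℕ) - 1) := by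
    intro j i hj hji
    have hsub : S.filter (· < i) ⊆ (S.filter (· < j)) ∪ Finset.Ioo j i := by
      intro k hk
      rw [Finset.mem_filter] at hk
      rcases lt_trichotomy k j with hkj | hkj | hkj
      · exact Finset.mem_union_left _ (Finset.mem_filter.mpr ⟨hk.1, hkj⟩)
      · exfalso; subst hkj; exact (hmemT k).mp hj hk.1
      · exact Finset.mem_union_right _ (Finset.mem_Ioo.mpr ⟨hkj, hk.2⟩)
    calc a i ≤ ((S.filter (· < j)) ∪ Finset.Ioo j i).card := Finset.card_le_card hsub
      _ ≤ a j + (Finset.Ioo j i).card := Finset.card_union_le _ _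
      _ = a j + ((i : ℕ) - (j : ℕ) - 1) := by rw [Fin.card_Ioo]
  -- positions in S are left-to-right maxima of g0
  have hg4 : ∀ i ∈ S, ∀ j, j < i → g0 j < g0 i := by
    intro i hi j hj
    have hiT : i ∉ T := fun hT => (hmemT i).mp hT hi
    rw [hg0S i hiT]
    by_cases hjT : j ∈ T
    · rw [hg0T j hjT, hwdef, orderEmbOfFin_lt_iff W ⟨r j, hrltW j hjT⟩ (v i)]
      show r j < (W.filter (· < v i)).card
      have e1 := hCW (v i)
      have e2 := hCV i hi
      have e3 := hsplit j
      have e4 := hsplit i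
      have e5 := hvval i
      have e6 := hacount j i hjT hj
      have hj' := Fin.lt_def.mp hj
      omega
    · rw [hg0S j hjT, Fin.lt_def, hvval, hvval]
      exact hvmono i hi j hj
  -- last S-position before a T-position, with all its data
  have hlastS : ∀ i ∈ T, ∃ m, m ∈ S ∧ m < i ∧ (∀ p, m < p → p ≤ i → p ∈ T) := by
    intro i hi
    have hne : (S.filter (· < i)).Nonempty :=
      ⟨⟨0, by omega⟩, Finset.mem_filter.mpr ⟨hS0, Fin.lt_def.mpr (show 0 < (i : ℕ) from hTpos i hi)⟩⟩
    set m := (S.filter (· < i)).max' hne with hm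
    have hmmem := (S.filter (· < i)).max'_mem hne
    rw [Finset.mem_filter] at hmmem
    refine ⟨m, hmmem.1, hmmem.2, ?_⟩
    intro p hp1 hp2
    by_contra hpT
    have hpS : p ∈ S := by by_contra hS; exact hpT ((hmemT p).mpr hS)
    have hpi : p < i := lt_of_le_of_ne hp2 (fun he => (hmemT i).mp hi (he ▸ hpS))
    have := (S.filter (· < i)).le_max' p (Finset.mem_filter.mpr ⟨hpS, hpi⟩)
    exact absurd this (not_le.mpr hp1)
  have hTdata : ∀ i ∈ T, ∃ m, m ∈ S ∧ m < i ∧ (∀ p, m < p → p ≤ i → p ∈ T) ∧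
      h m = h i + ((i : ℕ) - (m : ℕ)) ∧ a i = a m + 1 ∧ g0 i < v m := by
    intro i hi
    obtain ⟨m, hmS, hmi, hcond⟩ := hlastS i hi
    have hgapm : h m = h i + ((i : ℕ) - (m : ℕ)) :=
      hgap ((i : ℕ) - (m : ℕ)) m i (by have := Fin.lt_def.mp hmi; omega) hcond
    have ham : a i = a m + 1 := by
      have hins : S.filter (· < i) = insert m (S.filter (· < m)) := by
        ext k
        constructor
        · intro hk
          obtain ⟨hkS, hki⟩ := Finset.mem_filter.mp hk
          rcases lt_trichotomy k m with hkm | hkm | hkm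
          · exact Finset.mem_insert.mpr (Or.inr (Finset.mem_filter.mpr ⟨hkS, hkm⟩))
          · exact Finset.mem_insert.mpr (Or.inl hkm)
          · exact absurd hkS ((hmemT k).mp (hcond k hkm (le_of_lt hki)))
        · intro hk
          rcases Finset.mem_insert.mp hk with rfl | hk'
          · exact Finset.mem_filter.mpr ⟨hmS, hmi⟩
          · obtain ⟨hkS, hkm⟩ := Finset.mem_filter.mp hk'
            exact Finset.mem_filter.mpr ⟨hkS, lt_trans hkm hmi⟩
      show (S.filter (· < i)).card = (S.filter (· < m)).card + 1
      rw [hins, Finset.card_insert_of_notMem (by simp)]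
    have hρim : g0 i < v m := by
      rw [hg0T i hi, hwdef, orderEmbOfFin_lt_iff W ⟨r i, hrltW i hi⟩ (v m)]
      show r i < (W.filter (· < v m)).card
      have e1 := hCW (v m)
      have e2 := hCV m hmS
      have e3 := hsplit i
      have e4 := hsplit m
      have e5 := hvval m
      have := Fin.lt_def.mp hmi
      omega
    exact ⟨m, hmS, hmi, hcond, hgapm, ham, hρim⟩
  -- the permutation
  have hg0inj : Function.Injective g0 := by
    intro x y hxy
    by_cases hx : x ∈ T <;> by_cases hy : y ∈ T
    · rcases lt_trichotomy x y with hlt | heq | hlt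
      · exact absurd hxy (ne_of_lt (hTmono x y hx hy hlt))
      · exact heq
      · exact absurd hxy.symm (ne_of_lt (hTmono y x hy hx hlt))
    · exact absurd (hxy ▸ hg0W x hx) (hg0nW y hy)
    · exact absurd (hxy.symm ▸ hg0W y hy) (hg0nW x hx)
    · have hxS : x ∈ S := by by_contra hS; exact hx ((hmemT x).mpr hS)
      have hyS : y ∈ S := by by_contra hS; exact hy ((hmemT y).mpr hS)
      rw [hg0S x hx, hg0S y hy] at hxy
      rcases lt_trichotomy x y with hlt | heq | hlt
      · have := hvmono y hyS x hlt
        exact absurd (congrArg Fin.val hxy) (by rw [hvval, hvval]; omega)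
      · exact heq
      · have := hvmono x hxS y hlt
        exact absurd (congrArg Fin.val hxy) (by rw [hvval, hvval]; omega)
  set ρ : Equiv.Perm (Fin n) := Equiv.ofBijective g0 (Finite.injective_iff_bijective.mp hg0inj)
    with hρdef
  have hρ : ∀ i, ρ i = g0 i := fun i => rfl
  have hmaxS : ∀ i ∈ S, IsLRMax ρ i := by
    intro i hi j hj
    rw [hρ, hρ]
    exact hg4 i hi j hj
  have hTnm : ∀ i ∈ T, ¬ IsLRMax ρ i := by
    intro i hi hmax
    obtain ⟨m, hmS, hmi, _, _, _, hlt⟩ := hTdata i hi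
    have hthis := hmax m hmi
    rw [hρ, hρ, hg0S m (fun hT => (hmemT m).mp hT hmS)] at hthis
    exact lt_asymm hthis hlt
  -- heights at S positions
  have hgtS : ∀ i ∈ S, height321 ρ i = h i := by
    intro i hi
    have hval := val_eq_of_isLRMax ρ (hmaxS i hi)
    have hval2 : (ρ i : ℕ) = (i : ℕ) + h i := by
      rw [hρ, hg0S i (fun hT => (hmemT i).mp hT hi), hvval]
    omega
  -- heights at T positions
  have hgtT : ∀ i ∈ T, height321 ρ i = h i := by
    intro i hi
    obtain ⟨m, hmS, hmi, hcond, hgapm, ham, hρim⟩ := hTdata i hi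
    have hmT : m ∉ T := fun hT => (hmemT m).mp hT hmS
    have hlastB : IsLastLRMaxBefore ρ m i :=
      ⟨hmi, hmaxS m hmS, fun p hp1 hp2 => hTnm p (hcond p hp1 (le_of_lt hp2))⟩
    rw [height321_nonmax ρ (hTnm i hi) hlastB]
    have hρm : ρ m = v m := by rw [hρ]; exact hg0S m hmT
    have hρim' : ρ i < v m := by rw [hρ]; exact hρim
    have hbij : (Finset.univ.filter (fun k => i < k ∧ ρ i < ρ k ∧ ρ k < ρ m)).card
        = (W.filter (fun x => ρ i < x ∧ x < v m)).card := by
      apply Finset.card_bij (fun k _ => ρ k)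
      · intro k hk
        rw [Finset.mem_filter] at hk
        obtain ⟨_, h1, h2, h3⟩ := hk
        have hkT : k ∈ T := by
          by_contra hkT
          have hkS : k ∈ S := by by_contra hS; exact hkT ((hmemT k).mpr hS)
          rw [hρm, hρ, hg0S k hkT, Fin.lt_def, hvval, hvval] at h3
          have := hvmono k hkS m (lt_trans hmi h1)
          omega
        rw [Finset.mem_filter]
        exact ⟨by rw [hρ]; exact hg0W k hkT, h2, by rw [← hρm]; exact h3⟩
      · intro x _ y _ hxy; exact ρ.injective hxy
      · intro x hx
        rw [Finset.mem_filter] at hx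
        obtain ⟨hxW, hx1, hx2⟩ := hx
        have hkx : ρ (ρ.symm x) = x := ρ.apply_symm_apply x
        have hkT : ρ.symm x ∈ T := by
          by_contra hkT
          have hkS : ρ.symm x ∈ S := by by_contra hS; exact hkT ((hmemT _).mpr hS)
          apply Finset.mem_compl.mp hxW
          rw [← hkx, hρ, hg0S _ hkT]
          exact Finset.mem_image_of_mem v hkS
        have hik : i < ρ.symm x := by
          rcases lt_trichotomy i (ρ.symm x) with hlt | heq | hlt
          · exact hlt
          · exfalso; rw [← heq, hρ] at hkx; rw [← hkx] at hx1; exact lt_irrefl _ hx1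
          · exfalso
            have := hTmono _ _ hkT hi hlt
            rw [← hρ, ← hρ, hkx] at this
            exact lt_asymm hx1 this
        refine ⟨ρ.symm x, ?_, hkx⟩
        rw [Finset.mem_filter]
        exact ⟨Finset.mem_univ _, hik, by rw [hkx]; exact hx1, by rw [hkx, hρm]; exact hx2⟩
    have hρiW : ρ i ∈ W := by rw [hρ]; exact hg0W i hi
    have hYsdiff : W.filter (fun x => ρ i < x ∧ x < v m)
        = (W.filter (· < v m)) \ (W.filter (· ≤ ρ i)) := by
      ext x
      rw [Finset.mem_sdiff, Finset.mem_filter, Finset.mem_filter, Finset.mem_filter]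
      constructor
      · rintro ⟨hxW, h1, h2⟩
        exact ⟨⟨hxW, h2⟩, fun hc => absurd h1 (not_lt.mpr hc.2)⟩
      · rintro ⟨⟨hxW, h2⟩, hc⟩
        refine ⟨hxW, ?_, h2⟩
        by_contra hle
        exact hc ⟨hxW, not_lt.mp hle⟩
    have hsubY : (W.filter (· ≤ ρ i)) ⊆ (W.filter (· < v m)) := by
      intro x hx
      rw [Finset.mem_filter] at hx ⊢
      exact ⟨hx.1, lt_of_le_of_lt hx.2 hρim'⟩
    have hcardle : (W.filter (· ≤ ρ i)).card = r i + 1 := by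
      have hinsY : W.filter (· ≤ ρ i) = insert (ρ i) (W.filter (· < ρ i)) := by
        ext x
        rw [Finset.mem_filter, Finset.mem_insert, Finset.mem_filter]
        constructor
        · rintro ⟨hxW, hle⟩
          rcases eq_or_lt_of_le hle with he | hlt
          · exact Or.inl he
          · exact Or.inr ⟨hxW, hlt⟩
        · rintro (rfl | ⟨hxW, hlt⟩)
          · exact ⟨hρiW, le_refl _⟩
          · exact ⟨hxW, le_of_lt hlt⟩
      rw [hinsY, Finset.card_insert_of_notMem (by simp)]
      congr 1
      have heq : ρ i = w ⟨r i, hrltW i hi⟩ := by rw [hρ]; exact hg0T i hi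
      rw [heq, hwdef]
      exact card_filter_lt_orderEmbOfFin W ⟨r i, hrltW i hi⟩
    rw [hbij, hYsdiff, Finset.card_sdiff_of_subset hsubY, hcardle]
    have e1 := hCW (v m)
    have e2 := hCV m hmS
    have e3 := hsplit i
    have e4 := hsplit m
    have e5 := hvval m
    have e6 := Finset.card_le_card hsubY
    rw [hcardle] at e6
    have := Fin.lt_def.mp hmi
    omega
  -- avoidance
  have hSmono : ∀ x y : Fin n, x ∉ T → y ∉ T → x < y → ρ x < ρ y := by
    intro x y hx hy hxy
    have hyS : y ∈ S := by by_contra hS; exact hy ((hmemT y).mpr hS)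
    rw [hρ, hρ, hg0S x hx, hg0S y hy, Fin.lt_def, hvval, hvval]
    exact hvmono y hyS x hxy
  have hTmono' : ∀ x y : Fin n, x ∈ T → y ∈ T → x < y → ρ x < ρ y := by
    intro x y hx hy hxy
    rw [hρ, hρ]
    exact hTmono x y hx hy hxy
  have hA : Avoids321 ρ := by
    rintro p q c hpq hqc ⟨h1, h2⟩
    by_cases hp : p ∈ T <;> by_cases hq : q ∈ T <;> by_cases hc : c ∈ T
    all_goals first
      | exact absurd (hTmono' p q hp hq hpq) (lt_asymm h2)
      | exact absurd (hTmono' q c hq hc hqc) (lt_asymm h1)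
      | exact absurd (hTmono' p c hp hc (lt_trans hpq hqc)) (lt_asymm (lt_trans h1 h2))
      | exact absurd (hSmono p q hp hq hpq) (lt_asymm h2)
      | exact absurd (hSmono q c hq hc hqc) (lt_asymm h1)
      | exact absurd (hSmono p c hp hc (lt_trans hpq hqc)) (lt_asymm (lt_trans h1 h2))
  refine ⟨ρ, hA, ?_⟩
  intro i
  by_cases hi : i ∈ T
  · exact hgtT i hi
  · exact hgtS i (by by_contra hS; exact hi ((hmemT i).mpr hS))

end Surj

/-- For `n ≥ 1`, the 321-height-vector map is a bijection from the set of
(3,2,1)-avoiding permutations of {1,…,n} onto the set `H_n` of sequences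
`(h_1,…,h_n)` of nonnegative integers with `h_n = 0` and `h_i ≤ h_{i+1} + 1`. -/
theorem height321_bijOn_avoiding (n : ℕ) (hn : 1 ≤ n) :
    Set.BijOn (fun (ρ : Equiv.Perm (Fin n)) => fun i : Fin n => height321 ρ i)
      {ρ | ∀ a b c : Fin n, a < b → b < c → ¬(ρ c < ρ b ∧ ρ b < ρ a)}
      {h : Fin n → ℕ | h ⟨n - 1, by omega⟩ = 0 ∧
        ∀ i : ℕ, ∀ hi : i + 1 < n, h ⟨i, by omega⟩ ≤ h ⟨i + 1, hi⟩ + 1} := by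
  refine ⟨?_, ?_, ?_⟩
  · intro ρ hρ
    have hA : Avoids321 ρ := hρ
    refine ⟨?_, ?_⟩
    · exact height321_last ρ (i := ⟨n - 1, by omega⟩) rfl
    · intro i hi
      by_cases hmax : IsLRMax ρ ⟨i + 1, hi⟩
      · exact le_trans (step_max ρ hA (i := ⟨i, by omega⟩) (i' := ⟨i + 1, hi⟩) rfl hmax)
          (Nat.le_succ _)
      · exact le_of_eq (step_nonmax ρ hA (i := ⟨i, by omega⟩) (i' := ⟨i + 1, hi⟩) rfl hmax)
  · intro ρ hρ σ hσ hfg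
    exact heights_injective ρ σ hρ hσ (congrFun hfg)
  · intro hfun hmem
    obtain ⟨ρ, hA, hh⟩ := heights_surjective hn hfun hmem.1 hmem.2
    exact ⟨ρ, hA, funext hh⟩
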